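/- arXiv:2102.08181 — 2 statements merged into one kernel-verified Lean document; each statement's English description precedes it below -/
import Mathlib

section
/- For all real numbers $\alpha, \beta, x_3$ with $0 < \alpha \leq 1$, $0 < \beta \leq 1$, and $0 < x_3 \leq 1$, the quantity $X = 1 - \alpha\beta(2 - \beta + (1-\alpha)\beta^2) - \alpha(1-\beta)(2 - \alpha - \alpha\beta)\beta^4 x_3^4$ satisfies $X \geq (1-\alpha)^2 \geq 0$. -/
theorem stmt_2 (α β x3 : ℝ) (hα : 0 < α) (hα1 : α ≤ 1) (hβ : 0 < β) (hβ1 : β ≤ 1)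
    (hx : 0 < x3) (hx1 : x3 ≤ 1) :
    1 - α*β*(2 - β + (1-α)*β^2) - α*(1-β)*(2 - α - α*β)*β^4*x3^4 ≥ (1-α)^2 ∧
    (1-α)^2 ≥ 0 := by
  constructor
  · have hx4 : x3^4 ≤ 1 := pow_le_one₀ hx.le hx1
    have hc : 0 ≤ α*(1-β)*(2 - α - α*β)*β^4 := by
      have : 0 ≤ 2 - α - α*β := by nlinarith
      have : 0 ≤ α*(1-β) := by nlinarith
      positivity
    have hh : 0 ≤ (α - α^2) * ((1-β)*(1+β+β^2-β^4-β^5)) := by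
      have h1 : 0 ≤ α - α^2 := by nlinarith
      have h2 : 0 ≤ 1+β+β^2-β^4-β^5 := by nlinarith [pow_le_one₀ hβ.le hβ1 (n:=4), pow_le_one₀ hβ.le hβ1 (n:=5)]
      have h3 : 0 ≤ 1 - β := by linarith
      positivity
    have hg : 0 ≤ α * ((1-β)^2*(1-β^4)) := by
      have h4 : 0 ≤ 1 - β^4 := by nlinarith [pow_le_one₀ hβ.le hβ1 (n:=4)]
      have h5 : (0:ℝ) ≤ (1-β)^2 := sq_nonneg _
      exact mul_nonneg hα.le (mul_nonneg h5 h4)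
    nlinarith [mul_le_of_le_one_right hc hx4]
  · positivity
end

section
/- Define $\Delta(u) = \frac{1}{2\sqrt{2}}\left(-3 - \frac{\sqrt{2}}{e} + \sqrt{2}e + \frac{1 - e^u}{u} + u + \frac{u}{2e^u}\right)$ for $u \in (0, 2]$. Then $\Delta(u) < 0$ for all $u \in (0, 2]$. -/
theorem stmt_5 (u : ℝ) (hu : 0 < u) (hu2 : u ≤ 2) :
    (1/(2*Real.sqrt 2)) * (-3 - Real.sqrt 2 / Real.exp 1 + Real.sqrt 2 * Real.exp 1
      + (1 - Real.exp u)/u + u + u/(2*Real.exp u)) < 0 := by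
  have hs2pos : (0:ℝ) < Real.sqrt 2 := Real.sqrt_pos.mpr (by norm_num)
  have hs2 : Real.sqrt 2 < 1.4143 := by
    nlinarith [Real.sq_sqrt (by norm_num : (2:ℝ) ≥ 0), hs2pos]
  have hs2' : (1.414:ℝ) < Real.sqrt 2 := by
    nlinarith [Real.sq_sqrt (by norm_num : (2:ℝ) ≥ 0), hs2pos]
  have he1 : Real.exp 1 < 2.7182819 := by linarith [Real.exp_one_lt_d9]
  have he2 : (2.7182818:ℝ) < Real.exp 1 := by linarith [Real.exp_one_gt_d9]
  have hepos : (0:ℝ) < Real.exp 1 := Real.exp_pos 1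
  have hC : -3 - Real.sqrt 2 / Real.exp 1 + Real.sqrt 2 * Real.exp 1 < 0.4 := by
    have h1 : Real.sqrt 2 * Real.exp 1 < 1.4143 * 2.7182819 :=
      mul_lt_mul'' hs2 he1 hs2pos.le hepos.le
    have h2 : (1.414:ℝ)/2.7182819 < Real.sqrt 2 / Real.exp 1 :=
      div_lt_div₀ hs2' he1.le (by norm_num) hepos
    nlinarith
  have hE : 1 + u + u^2/2 + u^3/6 + u^4/24 ≤ Real.exp u := by
    have := Real.sum_le_exp_of_nonneg hu.le 5
    simp [Finset.sum_range_succ, Nat.factorial] at this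
    nlinarith [this]
  have hEpos : (0:ℝ) < Real.exp u := Real.exp_pos u
  have h1 : (1 - Real.exp u)/u ≤ -(1 + u/2 + u^2/6 + u^3/24) := by
    rw [div_le_iff₀ hu]; nlinarith
  have hq : (0:ℝ) < 2 + 2*u + u^2 := by positivity
  have h2 : u/(2*Real.exp u) ≤ u/(2 + 2*u + u^2) := by
    apply div_le_div_of_nonneg_left hu.le hq
    nlinarith
  have h3 : u/(2 + 2*u + u^2) < 0.6 - u/2 + u^2/6 + u^3/24 := by
    rw [div_lt_iff₀ hq]
    nlinarith [sq_nonneg (u-1), sq_nonneg u, sq_nonneg (u*(u-1)), sq_nonneg (u^2-1), mul_pos hu hu]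
  have hfac : (0:ℝ) < 1/(2*Real.sqrt 2) := by positivity
  have hinner : -3 - Real.sqrt 2 / Real.exp 1 + Real.sqrt 2 * Real.exp 1
      + (1 - Real.exp u)/u + u + u/(2*Real.exp u) < 0 := by linarith
  exact mul_neg_of_pos_of_neg hfac hinner
end
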